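/- Let (E₁, E₂, Φ) be a τ-stable triple and let τ' satisfy r₁τ + r₂τ' = deg E₁ + deg E₂. Then: (1) μ(E₁') < τ for all nonzero holomorphic subbundles E₁' ⊆ E₁; (2) μ(E₂') < τ' for all nonzero holomorphic subbundles E₂' ⊆ ker Φ; (3) μ(E₂'') > τ' for all nonzero holomorphic quotients E₂'' of E₂; (4) μ(E₁'') > τ for all nonzero holomorphic quotients E₁'' of E₁ with π∘Φ = 0, where π: E₁ → E₁'' is the quotient map. -/

import Mathlib

open CategoryTheory CategoryTheory.Limits

noncomputable section

/-- Slope `d/r` of a bundle of degree `d` and rank `r`. -/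
def bslope (d : ℤ) (r : ℕ) : ℝ := (d : ℝ) / (r : ℝ)

/-- The quantity `θ_τ(T')` for a subtriple with ranks `r1', r2'` and degrees `d1', d2'`
of a triple with ranks `r1, r2` and degrees `d1, d2`. -/
def thetaTau (τ : ℝ) (r1 r2 : ℕ) (d1 d2 : ℤ) (r1' r2' : ℕ) (d1' d2' : ℤ) : ℝ :=
  (bslope (d1' + d2') (r1' + r2') - τ) -
    ((r2' : ℝ) / (r2 : ℝ)) * (((r1 : ℝ) + (r2 : ℝ)) / ((r1' : ℝ) + (r2' : ℝ))) *
      (bslope (d1 + d2) (r1 + r2) - τ)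

universe v u

variable {C : Type u} [Category.{v} C] [Abelian C]

/-- `(E1', E2')` is a subtriple of `(E1, E2, Φ)` : `Φ` maps `E2'` into `E1'`. -/
def IsSubtriple {E1 E2 : C} (Φ : E2 ⟶ E1) (E1' : Subobject E1) (E2' : Subobject E2) : Prop :=
  E1'.Factors (E2'.arrow ≫ Φ)

/-- `θ_τ` of a subtriple, expressed through rank and degree functions. -/
def theta (rank : C → ℕ) (deg : C → ℤ) (E1 E2 : C) (τ : ℝ)
    (E1' : Subobject E1) (E2' : Subobject E2) : ℝ :=
  thetaTau τ (rank E1) (rank E2) (deg E1) (deg E2)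
    (rank (E1' : C)) (rank (E2' : C)) (deg (E1' : C)) (deg (E2' : C))

/-- τ-stability of the holomorphic triple `(E1, E2, Φ)`. -/
def TStable (rank : C → ℕ) (deg : C → ℤ) (E1 E2 : C) (Φ : E2 ⟶ E1) (τ : ℝ) : Prop :=
  ∀ (E1' : Subobject E1) (E2' : Subobject E2), IsSubtriple Φ E1' E2' →
    ¬(E1' = ⊥ ∧ E2' = ⊥) → ¬(E1' = ⊤ ∧ E2' = ⊤) →
    theta rank deg E1 E2 τ E1' E2' < 0

/-- τ-semistability of the holomorphic triple `(E1, E2, Φ)`. -/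
def TSemistable (rank : C → ℕ) (deg : C → ℤ) (E1 E2 : C) (Φ : E2 ⟶ E1) (τ : ℝ) : Prop :=
  ∀ (E1' : Subobject E1) (E2' : Subobject E2), IsSubtriple Φ E1' E2' →
    ¬(E1' = ⊥ ∧ E2' = ⊥) → ¬(E1' = ⊤ ∧ E2' = ⊤) →
    theta rank deg E1 E2 τ E1' E2' ≤ 0

/-- Slope stability for a single bundle. -/
def BStable (rank : C → ℕ) (deg : C → ℤ) (B : C) : Prop :=
  ∀ X : Subobject B, X ≠ ⊥ → X ≠ ⊤ →
    bslope (deg (X : C)) (rank (X : C)) < bslope (deg B) (rank B)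

/-- Slope semistability for a single bundle. -/
def BSemistable (rank : C → ℕ) (deg : C → ℤ) (B : C) : Prop :=
  ∀ X : Subobject B, X ≠ ⊥ →
    bslope (deg (X : C)) (rank (X : C)) ≤ bslope (deg B) (rank B)

lemma key_ineq (τ τ' : ℝ) (r1 r2 : ℕ) (d1 d2 : ℤ) (r1' r2' : ℕ) (d1' d2' : ℤ)
    (h1 : 0 < r1) (h2 : 0 < r2) (h12' : 0 < r1' + r2')
    (hsum : (r1:ℝ)*τ + (r2:ℝ)*τ' = (d1:ℝ) + (d2:ℝ))
    (hθ : thetaTau τ r1 r2 d1 d2 r1' r2' d1' d2' < 0) :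
    (d1':ℝ) + (d2':ℝ) < (r1':ℝ)*τ + (r2':ℝ)*τ' := by
  have hs : (0:ℝ) < (r1:ℝ)+(r2:ℝ) := by
    have := Nat.cast_pos (α := ℝ).mpr h1
    have := Nat.cast_pos (α := ℝ).mpr h2
    linarith
  have hs' : (0:ℝ) < (r1':ℝ)+(r2':ℝ) := by
    have := Nat.cast_pos (α := ℝ).mpr h12'
    push_cast at this
    linarith
  have hr2 : (0:ℝ) < (r2:ℝ) := Nat.cast_pos.mpr h2
  have e : thetaTau τ r1 r2 d1 d2 r1' r2' d1' d2' =
      (((d1':ℝ)+(d2':ℝ)) - (r1':ℝ)*τ - (r2':ℝ)*τ') / ((r1':ℝ)+(r2':ℝ)) := by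
    unfold thetaTau bslope
    push_cast
    rw [← hsum]
    field_simp
    ring
  rw [e, div_lt_iff₀ hs'] at hθ
  linarith

lemma isZero_of_top_eq_bot' {B : C} (h : (⊤ : Subobject B) = ⊥) : IsZero B := by
  by_contra hz
  have : Nontrivial (Subobject B) := Subobject.nontrivial_of_not_isZero hz
  obtain ⟨a, b, hab⟩ := exists_pair_ne (Subobject B)
  have ha : a = ⊥ := le_antisymm (h ▸ le_top) bot_le
  have hb : b = ⊥ := le_antisymm (h ▸ le_top) bot_le
  exact hab (ha.trans hb.symm)

/-- the four slope consequences of `τ`-stability, with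
`r₁τ + r₂τ' = deg E₁ + deg E₂`. -/
theorem slope_bounds_of_tStable
    (rank : C → ℕ) (deg : C → ℤ) (E1 E2 : C) (Φ : E2 ⟶ E1) (τ τ' : ℝ)
    (hrank_bot : ∀ (B : C) (X : Subobject B), X = ⊥ ↔ rank (X : C) = 0)
    (hrank_top : ∀ B : C, rank ((⊤ : Subobject B) : C) = rank B)
    (hdeg_top : ∀ B : C, deg ((⊤ : Subobject B) : C) = deg B)
    (hrank_add : ∀ (B : C) (X : Subobject B), rank B = rank (X : C) + rank (cokernel X.arrow))
    (hdeg_add : ∀ (B : C) (X : Subobject B), deg B = deg (X : C) + deg (cokernel X.arrow))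
    (hiso : ∀ A B : C, Nonempty (A ≅ B) → rank A = rank B ∧ deg A = deg B)
    (h1 : 0 < rank E1) (h2 : 0 < rank E2)
    (hττ' : (rank E1 : ℝ) * τ + (rank E2 : ℝ) * τ' = (deg E1 : ℝ) + (deg E2 : ℝ))
    (hst : TStable rank deg E1 E2 Φ τ) :
    (∀ E1' : Subobject E1, E1' ≠ ⊥ →
        bslope (deg (E1' : C)) (rank (E1' : C)) < τ) ∧
      (∀ E2' : Subobject E2, E2' ≠ ⊥ → E2' ≤ kernelSubobject Φ →
        bslope (deg (E2' : C)) (rank (E2' : C)) < τ') ∧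
      (∀ E2' : Subobject E2, E2' ≠ ⊤ →
        τ' < bslope (deg (cokernel E2'.arrow)) (rank (cokernel E2'.arrow))) ∧
      (∀ E1' : Subobject E1, E1' ≠ ⊤ → Φ ≫ cokernel.π E1'.arrow = 0 →
        τ < bslope (deg (cokernel E1'.arrow)) (rank (cokernel E1'.arrow))) := by
  have rank_bot : ∀ B : C, rank ((⊥ : Subobject B) : C) = 0 := fun B => (hrank_bot B ⊥).mp rfl
  have deg_bot : ∀ B : C, deg ((⊥ : Subobject B) : C) = 0 := by
    intro B
    have h := hdeg_add B ⊥
    have hi := (hiso (cokernel (⊥ : Subobject B).arrow) B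
      ⟨cokernelIsoOfEq Subobject.bot_arrow ≪≫ cokernelZeroIsoTarget⟩).2
    omega
  have rank_pos : ∀ (B : C) (X : Subobject B), X ≠ ⊥ → 0 < rank (X : C) := by
    intro B X hX
    exact Nat.pos_of_ne_zero fun h => hX ((hrank_bot B X).mpr h)
  have top_ne_bot : ∀ B : C, 0 < rank B → (⊤ : Subobject B) ≠ ⊥ := by
    intro B hB h
    have := (hrank_bot B ⊤).mp h
    rw [hrank_top] at this
    omega
  have cok_pos : ∀ (B : C) (X : Subobject B), X ≠ ⊤ → 0 < rank (cokernel X.arrow) := by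
    intro B X hX
    refine Nat.pos_of_ne_zero fun h => hX ?_
    have h2' : (⊤ : Subobject (cokernel X.arrow)) = ⊥ :=
      (hrank_bot _ ⊤).mpr (by rw [hrank_top]; exact h)
    have hz : IsZero (cokernel X.arrow) := isZero_of_top_eq_bot' h2'
    have : Epi X.arrow := Preadditive.epi_of_isZero_cokernel _ hz
    have : IsIso X.arrow := isIso_of_mono_of_epi _
    exact Subobject.eq_top_of_isIso_arrow X
  refine ⟨?_, ?_, ?_, ?_⟩
  · intro E1' hne
    have hsub : IsSubtriple Φ E1' (⊥ : Subobject E2) := by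
      unfold IsSubtriple
      rw [Subobject.bot_arrow, zero_comp]
      exact Subobject.factors_zero
    have hθ := hst E1' ⊥ hsub (fun h => hne h.1) (fun h => top_ne_bot E2 h2 h.2.symm)
    unfold theta at hθ
    rw [rank_bot, deg_bot] at hθ
    have hr1' := rank_pos E1 E1' hne
    have hk := key_ineq τ τ' _ _ _ _ _ 0 _ 0 h1 h2 (by omega) hττ' hθ
    unfold bslope
    rw [div_lt_iff₀ (by exact_mod_cast hr1')]
    push_cast at hk ⊢
    linarith
  · intro E2' hne hle
    have hzero : E2'.arrow ≫ Φ = 0 := by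
      rw [← Subobject.ofLE_arrow hle, Category.assoc, kernelSubobject_arrow_comp, comp_zero]
    have hsub : IsSubtriple Φ (⊥ : Subobject E1) E2' := by
      unfold IsSubtriple
      rw [hzero]
      exact Subobject.factors_zero
    have hθ := hst ⊥ E2' hsub (fun h => hne h.2) (fun h => top_ne_bot E1 h1 h.1.symm)
    unfold theta at hθ
    rw [rank_bot, deg_bot] at hθ
    have hr2' := rank_pos E2 E2' hne
    have hk := key_ineq τ τ' _ _ _ _ 0 _ 0 _ h1 h2 (by omega) hττ' hθ
    unfold bslope
    rw [div_lt_iff₀ (by exact_mod_cast hr2')]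
    push_cast at hk ⊢
    linarith
  · intro E2' hne
    have hsub : IsSubtriple Φ (⊤ : Subobject E1) E2' := Subobject.top_factors _
    have hθ := hst ⊤ E2' hsub (fun h => top_ne_bot E1 h1 h.1) (fun h => hne h.2)
    unfold theta at hθ
    rw [hrank_top, hdeg_top] at hθ
    have hk := key_ineq τ τ' _ _ _ _ _ _ _ _ h1 h2 (by omega) hττ' hθ
    have hradd := hrank_add E2 E2'
    have hdadd := hdeg_add E2 E2'
    have hcp := cok_pos E2 E2' hne
    unfold bslope
    rw [lt_div_iff₀ (by exact_mod_cast hcp)]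
    have hr : (rank (cokernel E2'.arrow) : ℝ) = (rank E2 : ℝ) - (rank (E2' : C) : ℝ) := by
      rw [hradd]; push_cast; ring
    have hd : (deg (cokernel E2'.arrow) : ℝ) = (deg E2 : ℝ) - (deg (E2' : C) : ℝ) := by
      rw [hdadd]; push_cast; ring
    rw [hr, hd]
    push_cast at hk
    nlinarith [hττ']
  · intro E1' hne hzero
    have hsub : IsSubtriple Φ E1' (⊤ : Subobject E2) := by
      unfold IsSubtriple
      rw [Subobject.factors_iff]
      exact ⟨Abelian.monoLift E1'.arrow ((⊤ : Subobject E2).arrow ≫ Φ)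
        (by rw [Category.assoc, hzero, comp_zero]), Abelian.monoLift_comp E1'.arrow _ _⟩
    have hθ := hst E1' ⊤ hsub (fun h => top_ne_bot E2 h2 h.2) (fun h => hne h.1)
    unfold theta at hθ
    rw [hrank_top, hdeg_top] at hθ
    have hk := key_ineq τ τ' _ _ _ _ _ _ _ _ h1 h2 (by omega) hττ' hθ
    have hradd := hrank_add E1 E1'
    have hdadd := hdeg_add E1 E1'
    have hcp := cok_pos E1 E1' hne
    unfold bslope
    rw [lt_div_iff₀ (by exact_mod_cast hcp)]
    have hr : (rank (cokernel E1'.arrow) : ℝ) = (rank E1 : ℝ) - (rank (E1' : C) : ℝ) := by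
      rw [hradd]; push_cast; ring
    have hd : (deg (cokernel E1'.arrow) : ℝ) = (deg E1 : ℝ) - (deg (E1' : C) : ℝ) := by
      rw [hdadd]; push_cast; ring
    rw [hr, hd]
    push_cast at hk
    nlinarith [hττ']
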